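/- If F is subexponential and g(x) → ∞ with g(x) ≤ x, then ∫_{g(x)}^{x} F̄(x-y)/F̄(x) dF(y) → 0 as x → ∞. -/

import Mathlib

open Filter MeasureTheory Set
open scoped ENNReal

noncomputable def tail (μ : Measure ℝ) (x : ℝ) : ℝ := (μ (Set.Ioi x)).toReal

noncomputable def convn (μ : Measure ℝ) : ℕ → Measure ℝ
  | 0 => Measure.dirac 0
  | n + 1 => ((convn μ n).prod μ).map (fun p : ℝ × ℝ => p.1 + p.2)

lemma tail_nonneg (μ : Measure ℝ) (x : ℝ) : 0 ≤ tail μ x := ENNReal.toReal_nonneg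

lemma tail_antitone (μ : Measure ℝ) [IsProbabilityMeasure μ] : Antitone (tail μ) := by
  intro a b hab
  exact ENNReal.toReal_mono (measure_ne_top μ _) (measure_mono (Set.Ioi_subset_Ioi hab))

lemma tail_le_one (μ : Measure ℝ) [IsProbabilityMeasure μ] (x : ℝ) : tail μ x ≤ 1 := by
  have h : (μ (Set.Ioi x)).toReal ≤ (μ Set.univ).toReal :=
    ENNReal.toReal_mono (measure_ne_top μ _) (measure_mono (Set.subset_univ _))
  simpa [tail] using h

lemma convn_one (μ : Measure ℝ) [IsProbabilityMeasure μ] : convn μ 1 = μ := by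
  show ((Measure.dirac 0).prod μ).map (fun p : ℝ × ℝ => p.1 + p.2) = μ
  rw [Measure.dirac_prod, Measure.map_map (by fun_prop) (by fun_prop)]
  simp [Function.comp_def]

lemma convn_two_apply (μ : Measure ℝ) [IsProbabilityMeasure μ] (hsupp : μ (Set.Iio 0) = 0)
    {x : ℝ} (hx : 0 ≤ x) :
    convn μ 2 (Set.Ioi x) = μ (Set.Ioi x) + ∫⁻ y in Set.Icc 0 x, μ (Set.Ioi (x - y)) ∂μ := by
  have hf : Measurable (fun p : ℝ × ℝ => p.1 + p.2) := by fun_prop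
  have h2 : convn μ 2 = (μ.prod μ).map (fun p : ℝ × ℝ => p.1 + p.2) := by
    show ((convn μ 1).prod μ).map _ = _
    rw [convn_one]
  rw [h2, Measure.map_apply hf measurableSet_Ioi,
    Measure.prod_apply (hf measurableSet_Ioi)]
  have hpre : ∀ a : ℝ, Prod.mk a ⁻¹' ((fun p : ℝ × ℝ => p.1 + p.2) ⁻¹' Set.Ioi x)
      = Set.Ioi (x - a) := by
    intro a
    ext b
    simp [sub_lt_iff_lt_add']
  simp_rw [hpre]
  -- restrict to Ici 0
  have hae : ∀ᵐ a ∂μ, a ∈ Set.Ici (0 : ℝ) := by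
    rw [ae_iff]
    simpa [Set.Iio] using hsupp
  have hres : μ.restrict (Set.Ici (0 : ℝ)) = μ := Measure.restrict_eq_self_of_ae_mem hae
  have hsplit : Set.Icc (0 : ℝ) x ∪ Set.Ioi x = Set.Ici 0 := by
    ext a
    simp only [Set.mem_union, Set.mem_Icc, Set.mem_Ioi, Set.mem_Ici]
    constructor
    · rintro (⟨h1, _⟩ | h1) <;> [exact h1; linarith]
    · intro h1
      rcases le_or_gt a x with h2 | h2
      · exact Or.inl ⟨h1, h2⟩
      · exact Or.inr h2
  have hdisj : Disjoint (Set.Icc (0 : ℝ) x) (Set.Ioi x) :=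
    Set.disjoint_left.2 fun a ha hb => absurd ha.2 (not_le.2 hb)
  calc ∫⁻ a, μ (Set.Ioi (x - a)) ∂μ
      = ∫⁻ a in Set.Icc 0 x ∪ Set.Ioi x, μ (Set.Ioi (x - a)) ∂μ := by
        rw [hsplit, hres]
    _ = (∫⁻ a in Set.Icc 0 x, μ (Set.Ioi (x - a)) ∂μ)
        + ∫⁻ a in Set.Ioi x, μ (Set.Ioi (x - a)) ∂μ := by
        rw [lintegral_union measurableSet_Ioi hdisj]
    _ = (∫⁻ a in Set.Icc 0 x, μ (Set.Ioi (x - a)) ∂μ) + μ (Set.Ioi x) := by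
        congr 1
        have hone : ∀ a ∈ Set.Ioi x, μ (Set.Ioi (x - a)) = 1 := by
          intro a ha
          have hlt : x - a < 0 := by simp only [Set.mem_Ioi] at ha; linarith
          refine le_antisymm prob_le_one ?_
          have h0 : μ (Set.Iic (x - a)) = 0 :=
            measure_mono_null (Set.Iic_subset_Iio.2 hlt) hsupp
          calc (1 : ℝ≥0∞) = μ Set.univ := measure_univ.symm
            _ = μ (Set.Iic (x - a) ∪ Set.Ioi (x - a)) := by rw [Set.Iic_union_Ioi]
            _ ≤ μ (Set.Iic (x - a)) + μ (Set.Ioi (x - a)) := measure_union_le _ _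
            _ = μ (Set.Ioi (x - a)) := by rw [h0, zero_add]
        rw [setLIntegral_congr_fun measurableSet_Ioi (show Set.EqOn (fun a => μ (Set.Ioi (x - a))) (fun _ => (1 : ℝ≥0∞)) (Set.Ioi x) from hone)]
        simp
    _ = μ (Set.Ioi x) + ∫⁻ a in Set.Icc 0 x, μ (Set.Ioi (x - a)) ∂μ := add_comm _ _

lemma tail_convn_two (μ : Measure ℝ) [IsProbabilityMeasure μ] (hsupp : μ (Set.Iio 0) = 0)
    {x : ℝ} (hx : 0 ≤ x) :
    tail (convn μ 2) x = tail μ x + ∫ y in Set.Icc 0 x, tail μ (x - y) ∂μ := by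
  have hmeas : Measurable fun y : ℝ => μ (Set.Ioi (x - y)) := by
    have hmono : Monotone fun y : ℝ => μ (Set.Ioi (x - y)) := by
      intro a b hab
      exact measure_mono (Set.Ioi_subset_Ioi (by linarith))
    exact hmono.measurable
  have hfin : (∫⁻ y in Set.Icc 0 x, μ (Set.Ioi (x - y)) ∂μ) ≠ ⊤ := by
    have hb : (∫⁻ y in Set.Icc 0 x, μ (Set.Ioi (x - y)) ∂μ)
        ≤ ∫⁻ _ in Set.Icc 0 x, 1 ∂μ := lintegral_mono fun y => prob_le_one
    refine ne_top_of_le_ne_top ?_ hb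
    simp [measure_ne_top]
  rw [tail, convn_two_apply μ hsupp hx, ENNReal.toReal_add (measure_ne_top μ _) hfin]
  congr 1
  rw [← integral_toReal (hmeas.aemeasurable) (ae_of_all _ fun y => measure_lt_top μ _)]
  rfl

/-- If F is subexponential and g(x) → ∞ with g(x) ≤ x, then
∫_{g(x)}^{x} F̄(x-y)/F̄(x) dF(y) → 0 as x → ∞. -/
theorem subexp_integral_tendsto_zero (μ : Measure ℝ) [IsProbabilityMeasure μ]
    (hsupp : μ (Set.Iio 0) = 0) (hunb : ∀ x, 0 < μ (Set.Ioi x))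
    (hsub : Tendsto (fun x => tail (convn μ 2) x / tail μ x) atTop (nhds 2))
    (g : ℝ → ℝ) (hg : Tendsto g atTop atTop) (hgx : ∀ x, g x ≤ x) :
    Tendsto (fun x => ∫ y in Set.Ioc (g x) x, tail μ (x - y) / tail μ x ∂μ)
      atTop (nhds 0) := by
  have htpos : ∀ x, 0 < tail μ x := fun x =>
    ENNReal.toReal_pos (hunb x).ne' (measure_ne_top μ _)
  have hmeas : Measurable (tail μ) := (tail_antitone μ).measurable
  -- integrability of the integrand on any set
  have hint : ∀ x : ℝ, ∀ s : Set ℝ,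
      IntegrableOn (fun y => tail μ (x - y) / tail μ x) s μ := by
    intro x s
    refine Integrable.mono' (integrable_const (1 / tail μ x)) ?_ ?_
    · exact ((hmeas.comp (measurable_const.sub measurable_id)).div_const
        _).aestronglyMeasurable
    · filter_upwards with y
      rw [Real.norm_eq_abs, abs_of_nonneg (div_nonneg (tail_nonneg μ _) (tail_nonneg μ _))]
      gcongr
      · exact (htpos x).le
      · exact tail_le_one μ _
  -- tail μ (g x) → 0
  have htail0 : Tendsto (fun t => tail μ t) atTop (nhds 0) := by
    have h1 : Tendsto (fun t : ℝ => μ (Set.Ioi t)) atTop (nhds 0) := by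
      have h2 := tendsto_measure_Iic_atTop (α := ℝ) μ
      rw [measure_univ] at h2
      have h3 : ∀ t : ℝ, μ (Set.Ioi t) = 1 - μ (Set.Iic t) := by
        intro t
        rw [← Set.compl_Iic, prob_compl_eq_one_sub measurableSet_Iic]
      simp_rw [h3]
      have h4 : Tendsto (fun t : ℝ => (1 : ℝ≥0∞) - μ (Set.Iic t)) atTop
          (nhds (1 - 1)) := by
        exact ENNReal.Tendsto.sub tendsto_const_nhds h2 (Or.inl (by simp))
      simpa using h4
    have h5 := (ENNReal.tendsto_toReal (a := 0) (by simp)).comp h1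
    simp only [Function.comp_def, ENNReal.toReal_zero] at h5
    exact h5
  have htailg : Tendsto (fun x => tail μ (g x)) atTop (nhds 0) := htail0.comp hg
  -- upper bound function tendsto 0
  have hU : Tendsto (fun x => (tail (convn μ 2) x / tail μ x - 2) + tail μ (g x))
      atTop (nhds 0) := by
    have := (hsub.sub_const 2).add htailg
    simpa using this
  refine tendsto_of_tendsto_of_tendsto_of_le_of_le' tendsto_const_nhds hU ?_ ?_
  · -- lower bound: 0 ≤ integral
    filter_upwards with x
    exact setIntegral_nonneg measurableSet_Ioc fun y _ =>
      div_nonneg (tail_nonneg μ _) (tail_nonneg μ _)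
  · -- upper bound
    filter_upwards [hg.eventually_ge_atTop 0] with x hgx0
    have hx0 : (0 : ℝ) ≤ x := le_trans hgx0 (hgx x)
    -- split identity
    have hsplit : Set.Icc (0 : ℝ) (g x) ∪ Set.Ioc (g x) x = Set.Icc 0 x :=
      Set.Icc_union_Ioc_eq_Icc hgx0 (hgx x)
    have hdisj : Disjoint (Set.Icc (0 : ℝ) (g x)) (Set.Ioc (g x) x) :=
      Set.disjoint_left.2 fun a ha hb => absurd ha.2 (not_le.2 hb.1)
    have hJ : (∫ y in Set.Icc 0 x, tail μ (x - y) / tail μ x ∂μ)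
        = (∫ y in Set.Icc 0 (g x), tail μ (x - y) / tail μ x ∂μ)
          + ∫ y in Set.Ioc (g x) x, tail μ (x - y) / tail μ x ∂μ := by
      rw [← hsplit, setIntegral_union hdisj measurableSet_Ioc (hint x _) (hint x _)]
    -- J value
    have hJval : (∫ y in Set.Icc 0 x, tail μ (x - y) / tail μ x ∂μ)
        = tail (convn μ 2) x / tail μ x - 1 := by
      rw [integral_div, tail_convn_two μ hsupp hx0, add_div, div_self (htpos x).ne']
      ring
    -- lower bound on L
    have hL : 1 - tail μ (g x) ≤ ∫ y in Set.Icc 0 (g x), tail μ (x - y) / tail μ x ∂μ := by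
      have h1 : (μ (Set.Icc 0 (g x))).toReal
          ≤ ∫ y in Set.Icc 0 (g x), tail μ (x - y) / tail μ x ∂μ := by
        have h0 : ∀ y ∈ Set.Icc (0 : ℝ) (g x), (1 : ℝ) ≤ tail μ (x - y) / tail μ x := by
          intro y hy
          rw [le_div_iff₀ (htpos x), one_mul]
          exact tail_antitone μ (by linarith [hy.1] : x - y ≤ x)
        have h2 := setIntegral_mono_on (μ := μ) (s := Set.Icc 0 (g x))
          (integrable_const (1 : ℝ)).integrableOn (hint x _) measurableSet_Icc h0
        simpa [Measure.real_def] using h2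
      refine le_trans ?_ h1
      -- 1 - tail μ (g x) ≤ μ (Icc 0 (g x)).toReal
      have h2 : (1 : ℝ≥0∞) ≤ μ (Set.Icc 0 (g x)) + μ (Set.Ioi (g x)) := by
        calc (1 : ℝ≥0∞) = μ Set.univ := measure_univ.symm
          _ = μ (Set.Iic (g x) ∪ Set.Ioi (g x)) := by rw [Set.Iic_union_Ioi]
          _ ≤ μ (Set.Iic (g x)) + μ (Set.Ioi (g x)) := measure_union_le _ _
          _ ≤ μ (Set.Icc 0 (g x)) + μ (Set.Ioi (g x)) := by
              refine add_le_add ?_ le_rfl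
              calc μ (Set.Iic (g x)) = μ (Set.Iio 0 ∪ Set.Icc 0 (g x)) := by
                    congr 1
                    ext a
                    simp only [Set.mem_Iic, Set.mem_union, Set.mem_Iio, Set.mem_Icc]
                    constructor
                    · intro h
                      rcases lt_or_ge a 0 with h' | h'
                      · exact Or.inl h'
                      · exact Or.inr ⟨h', h⟩
                    · rintro (h | ⟨_, h⟩) <;> linarith
                _ ≤ μ (Set.Iio 0) + μ (Set.Icc 0 (g x)) := measure_union_le _ _
                _ = μ (Set.Icc 0 (g x)) := by rw [hsupp, zero_add]
      have h3 : (1 : ℝ) ≤ (μ (Set.Icc 0 (g x))).toReal + tail μ (g x) := by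
        have := ENNReal.toReal_mono
          (a := (1 : ℝ≥0∞)) (b := μ (Set.Icc 0 (g x)) + μ (Set.Ioi (g x)))
          (by simp [measure_ne_top]) h2
        rw [ENNReal.toReal_add (measure_ne_top μ _) (measure_ne_top μ _)] at this
        simpa [tail] using this
      linarith
    -- combine
    have hM : (∫ y in Set.Ioc (g x) x, tail μ (x - y) / tail μ x ∂μ)
        = (tail (convn μ 2) x / tail μ x - 1)
          - ∫ y in Set.Icc 0 (g x), tail μ (x - y) / tail μ x ∂μ := by
      rw [← hJval, hJ]; ring
    rw [hM]
    linarith
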